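/- Let $(T_t)$ be a sub-Markovian positive $C_0$-semigroup on $L^p(E;m)$ (i.e. $0 \le T_t f \le 1$ whenever $0 \le f \le 1$). If $u \in L^p(E;m)$ is supermedian (i.e. $u \ge 0$ and $T_t u \le u$ for all $t \ge 0$) and $\phi : [0,\infty) \to [0,\infty)$ is concave, then $\phi(u) \in L^p(E;m)$ and $\phi(u)$ is supermedian. -/

import Mathlib

open MeasureTheory Filter

/-- A nonnegative concave function on `[0,∞)` is monotone. -/
private lemma concave_nonneg_mono {φ : ℝ → ℝ} (hφconc : ConcaveOn ℝ (Set.Ici 0) φ)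
    (hφ0 : ∀ y : ℝ, 0 ≤ y → 0 ≤ φ y) :
    ∀ x y : ℝ, 0 ≤ x → x ≤ y → φ x ≤ φ y := by
  intro x y hx hxy
  rcases eq_or_lt_of_le hxy with rfl | hlt
  · exact le_rfl
  have key : ∀ z : ℝ, y < z → ((z - y) / (z - x)) * φ x ≤ φ y := by
    intro z hz
    have hxz : x < z := hlt.trans hz
    have hzx : 0 < z - x := by linarith
    have ha : (0:ℝ) ≤ (z - y) / (z - x) := div_nonneg (by linarith) hzx.le
    have hb : (0:ℝ) ≤ (y - x) / (z - x) := div_nonneg (by linarith) hzx.le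
    have hab : (z - y) / (z - x) + (y - x) / (z - x) = 1 := by field_simp; ring
    have hcomb : ((z - y) / (z - x)) * x + ((y - x) / (z - x)) * z = y := by
      field_simp; ring
    have h2 := hφconc.2 (Set.mem_Ici.2 hx) (Set.mem_Ici.2 (hx.trans hxz.le)) ha hb hab
    simp only [smul_eq_mul, hcomb] at h2
    have hz0 : 0 ≤ φ z := hφ0 z (hx.trans hxz.le)
    nlinarith
  have hlim : Tendsto (fun z : ℝ => ((z - y) / (z - x)) * φ x) atTop (nhds (φ x)) := by
    have h1 : Tendsto (fun z : ℝ => 1 - (y - x) * (z - x)⁻¹) atTop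
        (nhds (1 - (y - x) * 0)) := by
      exact (tendsto_const_nhds.mul
        (tendsto_inv_atTop_zero.comp (tendsto_atTop_add_const_right atTop (-x) tendsto_id))
        |>.const_sub 1)
    simp only [mul_zero, sub_zero] at h1
    have h2 : Tendsto (fun z : ℝ => (1 - (y - x) * (z - x)⁻¹) * φ x) atTop
        (nhds (1 * φ x)) := h1.mul_const _
    rw [one_mul] at h2
    refine h2.congr' ?_
    filter_upwards [eventually_gt_atTop (max x y)] with z hz
    have hzx : x < z := (le_max_left x y).trans_lt hz
    have : z - x ≠ 0 := by intro h; linarith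
    field_simp; ring
  refine le_of_tendsto hlim ?_
  filter_upwards [eventually_gt_atTop y] with z hz using key z hz

/-- A supporting line at `q > 0`. -/
private lemma concave_support_line {φ : ℝ → ℝ} (hφconc : ConcaveOn ℝ (Set.Ici 0) φ)
    (hφ0 : ∀ y : ℝ, 0 ≤ y → 0 ≤ φ y) (q : ℝ) (hq : 0 < q) :
    ∃ a b : ℝ, 0 ≤ a ∧ 0 ≤ b ∧ (∀ y : ℝ, 0 ≤ y → φ y ≤ a * y + b) ∧ a * q + b = φ q := by
  have hmono := concave_nonneg_mono hφconc hφ0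
  set S : Set ℝ := {m : ℝ | ∃ r : ℝ, q < r ∧ m = (φ r - φ q) / (r - q)} with hS
  have hne : S.Nonempty := ⟨(φ (q + 1) - φ q) / (q + 1 - q), q + 1, by linarith, rfl⟩
  have hbdd : BddAbove S := by
    refine ⟨(φ q - φ (q / 2)) / (q - q / 2), ?_⟩
    rintro m ⟨r, hr, rfl⟩
    exact hφconc.slope_anti_adjacent (Set.mem_Ici.2 (by linarith)) (Set.mem_Ici.2 (by linarith))
      (by linarith) hr
  set a : ℝ := sSup S with ha_def
  have hsupport : ∀ y : ℝ, 0 ≤ y → φ y ≤ φ q + a * (y - q) := by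
    intro y hy
    rcases lt_trichotomy y q with hlt | rfl | hgt
    · have hle : a ≤ (φ q - φ y) / (q - y) := by
        refine csSup_le hne ?_
        rintro m ⟨r, hr, rfl⟩
        exact hφconc.slope_anti_adjacent (Set.mem_Ici.2 hy) (Set.mem_Ici.2 (by linarith))
          hlt hr
      have hqy : 0 < q - y := by linarith
      have h2 : a * (q - y) ≤ φ q - φ y := by
        have := mul_le_mul_of_nonneg_right hle hqy.le
        rwa [div_mul_cancel₀ _ hqy.ne'] at this
      nlinarith
    · simp
    · have hmem : (φ y - φ q) / (y - q) ∈ S := ⟨y, hgt, rfl⟩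
      have hle : (φ y - φ q) / (y - q) ≤ a := le_csSup hbdd hmem
      have hyq : 0 < y - q := by linarith
      have h2 : φ y - φ q ≤ a * (y - q) := by
        have := mul_le_mul_of_nonneg_right hle hyq.le
        rwa [div_mul_cancel₀ _ hyq.ne'] at this
      linarith
  have ha0 : 0 ≤ a := by
    have hmem : (φ (q + 1) - φ q) / (q + 1 - q) ∈ S := ⟨q + 1, by linarith, rfl⟩
    have h1 : 0 ≤ (φ (q + 1) - φ q) / (q + 1 - q) := by
      have := hmono q (q + 1) hq.le (by linarith)
      apply div_nonneg (by linarith) (by norm_num)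
    exact h1.trans (le_csSup hbdd hmem)
  refine ⟨a, φ q - a * q, ha0, ?_, ?_, by ring⟩
  · have := hsupport 0 le_rfl
    have h0 := hφ0 0 le_rfl
    nlinarith
  · intro y hy
    have := hsupport y hy
    linarith

/-- Dominated convergence for `eLpNorm`. -/
private lemma tendsto_eLpNorm_zero_of_dominated {α : Type*} [MeasurableSpace α] {μ : Measure α}
    {p : ENNReal} (hp0 : p ≠ 0) (hpt : p ≠ ⊤) {f : ℕ → α → ℝ}
    (hfm : ∀ n, AEStronglyMeasurable (f n) μ) {bound : α → ℝ} (hbmem : MemLp bound p μ)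
    (hb : ∀ n, ∀ᵐ x ∂μ, ‖f n x‖ ≤ bound x)
    (hlim : ∀ᵐ x ∂μ, Tendsto (fun n => f n x) atTop (nhds 0)) :
    Tendsto (fun n => eLpNorm (f n) p μ) atTop (nhds 0) := by
  have hpt' : 0 < p.toReal := ENNReal.toReal_pos hp0 hpt
  have hmain : Tendsto (fun n => ∫⁻ x, (‖f n x‖₊ : ENNReal) ^ p.toReal ∂μ) atTop (nhds 0) := by
    have h0 : (0 : ENNReal) = ∫⁻ _x, (0 : ENNReal) ∂μ := by simp
    rw [h0]
    refine tendsto_lintegral_of_dominated_convergence'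
      (fun x => (‖bound x‖₊ : ENNReal) ^ p.toReal)
      (fun n => ((hfm n).enorm.pow_const _)) (fun n => ?_) ?_ ?_
    · filter_upwards [hb n] with x hx
      have h1 : (‖f n x‖₊ : ENNReal) ≤ (‖bound x‖₊ : ENNReal) := by
        refine ENNReal.coe_le_coe.2 ?_
        have : ‖f n x‖ ≤ ‖bound x‖ := hx.trans (le_abs_self _)
        exact_mod_cast this
      exact ENNReal.rpow_le_rpow h1 hpt'.le
    · have := hbmem.eLpNorm_lt_top
      have h2 := lintegral_rpow_enorm_lt_top_of_eLpNorm_lt_top hp0 hpt this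
      exact h2.ne
    · filter_upwards [hlim] with x hx
      have h1 : Tendsto (fun n => (‖f n x‖₊ : ENNReal)) atTop
          (nhds (((0 : NNReal) : ENNReal))) := by
        rw [ENNReal.tendsto_coe, ← NNReal.tendsto_coe]
        simpa using hx.norm
      rw [ENNReal.coe_zero] at h1
      have h2 := ((ENNReal.continuous_rpow_const (y := p.toReal)).tendsto (0 : ENNReal)).comp h1
      rwa [ENNReal.zero_rpow_of_pos hpt'] at h2
  have heq : (fun n => eLpNorm (f n) p μ)
      = fun n => (∫⁻ x, (‖f n x‖₊ : ENNReal) ^ p.toReal ∂μ) ^ (1 / p.toReal) := by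
    funext n
    rw [eLpNorm_eq_lintegral_rpow_enorm_toReal hp0 hpt]
    rfl
  rw [heq]
  have hcont := ((ENNReal.continuous_rpow_const (y := 1 / p.toReal)).tendsto (0 : ENNReal)).comp hmain
  rwa [ENNReal.zero_rpow_of_pos (by positivity : (0:ℝ) < 1 / p.toReal)] at hcont

set_option maxHeartbeats 2000000 in
/-- If `(T t)` is a sub-Markovian positive `C₀`-semigroup on `L^p(E;m)`,
`u` is supermedian and `φ : [0,∞) → [0,∞)` is concave, then `φ(u) ∈ L^p` and `φ(u)`
is supermedian. -/
theorem concave_comp_supermedian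
    {E : Type*} [MeasurableSpace E] (μ : Measure E) [IsFiniteMeasure μ]
    (p : ENNReal) [Fact (1 ≤ p)] (hp : p ≠ ⊤)
    (T : ℝ → Lp ℝ p μ →L[ℝ] Lp ℝ p μ)
    (hsemigroup : T 0 = ContinuousLinearMap.id ℝ (Lp ℝ p μ) ∧
      ∀ s t : ℝ, 0 ≤ s → 0 ≤ t → T (s + t) = (T s).comp (T t))
    (hC0 : ∀ f : Lp ℝ p μ, Tendsto (fun t => T t f) (nhdsWithin 0 (Set.Ici 0)) (nhds f))
    (hpos : ∀ t : ℝ, 0 ≤ t → ∀ f : Lp ℝ p μ, 0 ≤ f → 0 ≤ T t f)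
    (hsubMarkov : ∀ t : ℝ, 0 ≤ t → ∀ f : Lp ℝ p μ, 0 ≤ f →
      (∀ᵐ x ∂μ, f x ≤ 1) → ∀ᵐ x ∂μ, (T t f) x ≤ 1)
    (u : Lp ℝ p μ) (hu0 : 0 ≤ u) (husup : ∀ t : ℝ, 0 ≤ t → T t u ≤ u)
    (φ : ℝ → ℝ) (hφconc : ConcaveOn ℝ (Set.Ici 0) φ)
    (hφ0 : ∀ y : ℝ, 0 ≤ y → 0 ≤ φ y) :
    MemLp (fun x => φ (u x)) p μ ∧
      ∃ w : Lp ℝ p μ, (w : E → ℝ) =ᵐ[μ] (fun x => φ (u x)) ∧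
        0 ≤ w ∧ ∀ t : ℝ, 0 ≤ t → T t w ≤ w := by
  have hp0 : p ≠ 0 := by
    have h1 : (1 : ENNReal) ≤ p := Fact.out
    intro h; rw [h] at h1; exact (by norm_num : ¬ ((1:ENNReal) ≤ 0)) h1
  have hmono := concave_nonneg_mono hφconc hφ0
  have hu0ae : ∀ᵐ x ∂μ, 0 ≤ u x := (Lp.coeFn_nonneg u).2 hu0
  set C : ℝ := φ 1 with hC_def
  have hC0 : 0 ≤ C := hφ0 1 zero_le_one
  -- linear bound
  have hlinbound : ∀ y : ℝ, 0 ≤ y → φ y ≤ C + C * y := by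
    intro y hy
    rcases le_or_gt y 1 with h1 | h1
    · have := hmono y 1 hy h1
      nlinarith
    · have ha : (0:ℝ) ≤ 1 - 1 / y := by
        have : 1 / y ≤ 1 := by
          rw [div_le_one (by linarith)]; linarith
        linarith
      have hb : (0:ℝ) ≤ 1 / y := by positivity
      have hab : (1 - 1 / y) + 1 / y = 1 := by ring
      have hcomb : (1 - 1 / y) * (0:ℝ) + (1 / y) * y = 1 := by
        field_simp; ring
      have h2 := hφconc.2 (Set.mem_Ici.2 le_rfl) (Set.mem_Ici.2 hy) ha hb hab
      simp only [smul_eq_mul, hcomb] at h2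
      have h00 := hφ0 0 le_rfl
      have hyy : 0 < y := by linarith
      have h4 : φ y ≤ y * C - (y - 1) * φ 0 := by
        have h5 := mul_le_mul_of_nonneg_right h2 hyy.le
        have h6 : ((1 - 1 / y) * φ 0 + 1 / y * φ y) * y = (y - 1) * φ 0 + φ y := by
          field_simp
        rw [h6] at h5
        nlinarith
      nlinarith [mul_nonneg (by linarith : (0:ℝ) ≤ y - 1) h00]
  -- measurability
  have humeas := (Lp.aestronglyMeasurable u).aemeasurable
  have hφm_mono : Monotone fun y : ℝ => φ (max y 0) := by
    intro x y hxy
    exact hmono _ _ (le_max_right _ _) (max_le_max hxy le_rfl)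
  have hφm_meas : Measurable fun y : ℝ => φ (max y 0) := hφm_mono.measurable
  have heq : (fun x => φ (u x)) =ᵐ[μ] fun x => φ (max (u x) 0) := by
    filter_upwards [hu0ae] with x hx
    rw [max_eq_left hx]
  have hmeas : AEStronglyMeasurable (fun x => φ (u x)) μ :=
    ((hφm_meas.comp_aemeasurable humeas).aestronglyMeasurable).congr heq.symm
  have hmem : MemLp (fun x => φ (u x)) p μ := by
    have hg : MemLp (fun x => C + C * ‖u x‖) p μ :=
      (memLp_const C).add (((Lp.memLp u).norm).const_mul C)
    refine hg.of_le hmeas ?_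
    filter_upwards [hu0ae] with x hx
    have h1 : 0 ≤ φ (u x) := hφ0 _ hx
    have h2 : φ (u x) ≤ C + C * ‖u x‖ := by
      have := hlinbound (u x) hx
      rwa [Real.norm_of_nonneg hx]
    rw [Real.norm_of_nonneg h1]
    exact h2.trans (le_abs_self _)
  refine ⟨hmem, ?_⟩
  set w : Lp ℝ p μ := hmem.toLp _ with hw_def
  have hw_coe : (w : E → ℝ) =ᵐ[μ] fun x => φ (u x) := hmem.coeFn_toLp
  have hw0 : 0 ≤ w := by
    rw [← Lp.coeFn_nonneg]
    filter_upwards [hw_coe, hu0ae] with x h1 h2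
    rw [h1]; exact hφ0 _ h2
  refine ⟨w, hw_coe, hw0, ?_⟩
  intro t ht
  -- constant one function
  set one : Lp ℝ p μ := (memLp_const (1:ℝ)).toLp _ with hone_def
  have hone_coe : (one : E → ℝ) =ᵐ[μ] fun _ => (1:ℝ) := (memLp_const (1:ℝ)).coeFn_toLp
  have hone0 : 0 ≤ one := by
    rw [← Lp.coeFn_nonneg]
    filter_upwards [hone_coe] with x h1
    rw [h1]; norm_num
  have hmonoT : ∀ f g : Lp ℝ p μ, f ≤ g → T t f ≤ T t g := by
    intro f g hfg
    have h1 : (0 : Lp ℝ p μ) ≤ g - f := by rwa [sub_nonneg]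
    have h2 := hpos t ht (g - f) h1
    rw [map_sub] at h2
    rwa [sub_nonneg] at h2
  have hTone : ∀ᵐ x ∂μ, (T t one) x ≤ 1 := by
    refine hsubMarkov t ht one hone0 ?_
    filter_upwards [hone_coe] with x h1
    rw [h1]
  have huae : ∀ᵐ x ∂μ, (T t u) x ≤ u x := (Lp.coeFn_le _ _).2 (husup t ht)
  -- affine domination: if w ≤ᵐ a*u + b with a,b ≥ 0 then T t w ≤ᵐ a*u + b
  have haffine : ∀ a b : ℝ, 0 ≤ a → 0 ≤ b → (∀ᵐ x ∂μ, φ (u x) ≤ a * u x + b) →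
      ∀ᵐ x ∂μ, (T t w) x ≤ a * u x + b := by
    intro a b ha hb hwle
    have hle : w ≤ a • u + b • one := by
      rw [← Lp.coeFn_le]
      filter_upwards [hw_coe, hwle, Lp.coeFn_add (a • u) (b • one), Lp.coeFn_smul a u,
        Lp.coeFn_smul b one, hone_coe] with x h1 h2 h3 h4 h5 h6
      rw [h1, h3]
      simp only [Pi.add_apply]
      rw [h4, h5]
      simp only [Pi.smul_apply, smul_eq_mul, h6]
      rw [mul_one]
      exact h2
    have h2 : T t w ≤ T t (a • u + b • one) := hmonoT _ _ hle
    have h3 : T t (a • u + b • one) = a • T t u + b • T t one := by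
      rw [map_add, _root_.map_smul, _root_.map_smul]
    rw [h3] at h2
    have h4 : ∀ᵐ x ∂μ, (T t w) x ≤ (a • T t u + b • T t one) x := (Lp.coeFn_le _ _).2 h2
    filter_upwards [h4, Lp.coeFn_add (a • T t u) (b • T t one), Lp.coeFn_smul a (T t u),
      Lp.coeFn_smul b (T t one), huae, hTone] with x h5 h6 h7 h8 h9 h10
    rw [h6] at h5
    simp only [Pi.add_apply] at h5
    rw [h7, h8] at h5
    simp only [Pi.smul_apply, smul_eq_mul] at h5
    have : a * (T t u) x + b * (T t one) x ≤ a * u x + b :=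
      add_le_add (mul_le_mul_of_nonneg_left h9 ha)
        (by calc b * (T t one) x ≤ b * 1 := mul_le_mul_of_nonneg_left h10 hb
            _ = b := mul_one b)
    exact h5.trans this
  -- bound via supporting line at rational q
  have hq_bound : ∀ q : ℚ, 0 < q → ∀ᵐ x ∂μ, 0 ≤ u x → u x ≤ (q:ℝ) → (T t w) x ≤ φ q := by
    intro q hq
    have hqR : (0:ℝ) < (q:ℝ) := by exact_mod_cast hq
    obtain ⟨a, b, ha, hb, hsupp, heq⟩ := concave_support_line hφconc hφ0 (q:ℝ) hqR
    have hae := haffine a b ha hb (by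
      filter_upwards [hu0ae] with x hx
      exact hsupp (u x) hx)
    filter_upwards [hae] with x hx hx0 hxq
    calc (T t w) x ≤ a * u x + b := hx
      _ ≤ a * q + b := by nlinarith
      _ = φ q := heq
  -- truncation sequence
  set g : ℕ → Lp ℝ p μ := fun n => (n:ℝ) • u + (φ 0) • one with hg_def
  set v : ℕ → Lp ℝ p μ := fun n => w ⊓ g n with hv_def
  have hg_coe : ∀ n : ℕ, ∀ᵐ x ∂μ, (g n : E → ℝ) x = (n:ℝ) * u x + φ 0 := by
    intro n
    filter_upwards [Lp.coeFn_add ((n:ℝ) • u) ((φ 0) • one), Lp.coeFn_smul ((n:ℝ)) u,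
      Lp.coeFn_smul (φ 0) one, hone_coe] with x h1 h2 h3 h4
    calc (g n : E → ℝ) x
        = ((((n:ℝ) • u : Lp ℝ p μ)) : E → ℝ) x + ((((φ 0) • one : Lp ℝ p μ)) : E → ℝ) x := h1
      _ = (n:ℝ) * u x + φ 0 * (one : E → ℝ) x := by rw [h2, h3]; rfl
      _ = (n:ℝ) * u x + φ 0 := by rw [h4, mul_one]
  have hv_coe : ∀ n : ℕ, ∀ᵐ x ∂μ, (v n : E → ℝ) x = min ((w : E → ℝ) x) ((n:ℝ) * u x + φ 0) := by
    intro n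
    filter_upwards [Lp.coeFn_inf w (g n), hg_coe n] with x h1 h2
    calc (v n : E → ℝ) x = ((w : E → ℝ) ⊓ ((g n) : E → ℝ)) x := h1
      _ = min ((w : E → ℝ) x) ((g n : E → ℝ) x) := rfl
      _ = min ((w : E → ℝ) x) ((n:ℝ) * u x + φ 0) := by rw [h2]
  have hφ00 : 0 ≤ φ 0 := hφ0 0 le_rfl
  -- a.e. bound for T t (v n)
  have hA : ∀ n : ℕ, ∀ᵐ x ∂μ, (T t (v n)) x ≤ (n:ℝ) * u x + φ 0 := by
    intro n
    have hle : v n ≤ g n := inf_le_right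
    have h2 : T t (v n) ≤ T t (g n) := hmonoT _ _ hle
    have h3 : T t (g n) = (n:ℝ) • T t u + (φ 0) • T t one := by
      rw [hg_def]; rw [map_add, _root_.map_smul, _root_.map_smul]
    rw [h3] at h2
    have h4 := (Lp.coeFn_le _ _).2 h2
    filter_upwards [h4, Lp.coeFn_add ((n:ℝ) • T t u) ((φ 0) • T t one),
      Lp.coeFn_smul ((n:ℝ)) (T t u), Lp.coeFn_smul (φ 0) (T t one), huae, hTone]
      with x h5 h6 h7 h8 h9 h10
    rw [h6] at h5
    simp only [Pi.add_apply] at h5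
    rw [h7, h8] at h5
    simp only [Pi.smul_apply, smul_eq_mul] at h5
    have hn0 : (0:ℝ) ≤ (n:ℝ) := Nat.cast_nonneg n
    have : (n:ℝ) * (T t u) x + φ 0 * (T t one) x ≤ (n:ℝ) * u x + φ 0 :=
      add_le_add (mul_le_mul_of_nonneg_left h9 hn0)
        (by calc φ 0 * (T t one) x ≤ φ 0 * 1 := mul_le_mul_of_nonneg_left h10 hφ00
            _ = φ 0 := mul_one _)
    exact h5.trans this
  -- convergence v n → w in Lp
  have hvw : Tendsto v atTop (nhds w) := by
    rw [Lp.tendsto_Lp_iff_tendsto_eLpNorm']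
    refine tendsto_eLpNorm_zero_of_dominated hp0 hp
      (fun n => ((Lp.aestronglyMeasurable (v n)).sub (Lp.aestronglyMeasurable w)))
      ((Lp.memLp w).norm.add (memLp_const |φ 0|)) (fun n => ?_) ?_
    · filter_upwards [hv_coe n, hu0ae] with x h1 h2
      simp only [Pi.sub_apply]
      rw [h1]
      simp only [Real.norm_eq_abs, Pi.add_apply]
      rw [abs_le]
      have hn0 : (0:ℝ) ≤ (n:ℝ) * u x := mul_nonneg (Nat.cast_nonneg n) h2
      have habs1 : -|(w : E → ℝ) x| ≤ (w : E → ℝ) x := neg_abs_le _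
      have habs2 : (w : E → ℝ) x ≤ |(w : E → ℝ) x| := le_abs_self _
      have habs3 : -|φ 0| ≤ φ 0 := neg_abs_le _
      have habs4 : (0:ℝ) ≤ |φ 0| := abs_nonneg _
      have hmin1 : min ((w : E → ℝ) x) ((n:ℝ) * u x + φ 0) ≤ (w : E → ℝ) x := min_le_left _ _
      have habs5 : (0:ℝ) ≤ |(w : E → ℝ) x| := abs_nonneg _
      constructor
      · rcases min_cases ((w : E → ℝ) x) ((n:ℝ) * u x + φ 0) with ⟨h, _⟩ | ⟨h, _⟩ <;>
          rw [h] <;> linarith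
      · linarith
    · have hvall : ∀ᵐ x ∂μ, ∀ n : ℕ, (v n : E → ℝ) x
          = min ((w : E → ℝ) x) ((n:ℝ) * u x + φ 0) := ae_all_iff.2 hv_coe
      filter_upwards [hvall, hu0ae, hw_coe] with x h1 h2 h3
      simp only [Pi.sub_apply]
      rcases eq_or_lt_of_le h2 with h4 | h4
      · have : ∀ n : ℕ, (v n : E → ℝ) x - (w : E → ℝ) x = 0 := by
          intro n
          rw [h1 n, h3, ← h4]
          simp
        simp only [this]
        exact tendsto_const_nhds
      · have htend : Tendsto (fun n : ℕ => (n:ℝ) * u x) atTop atTop :=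
          Tendsto.atTop_mul_const h4 tendsto_natCast_atTop_atTop
        have hev : ∀ᶠ n : ℕ in atTop, (v n : E → ℝ) x - (w : E → ℝ) x = 0 := by
          filter_upwards [htend.eventually_ge_atTop ((w : E → ℝ) x), eventually_ge_atTop 0]
            with n h5 _
          rw [h1 n, min_eq_left (by linarith)]
          ring
        exact Tendsto.congr' (by filter_upwards [hev] with n h; rw [h]) tendsto_const_nhds
  have hTvw : Tendsto (fun n => T t (v n)) atTop (nhds (T t w)) :=
    ((T t).continuous.tendsto w).comp hvw
  obtain ⟨ns, _, hae_sub⟩ := (tendstoInMeasure_of_tendsto_Lp hTvw).exists_seq_tendsto_ae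
  -- combine everything a.e.
  have hAall : ∀ᵐ x ∂μ, ∀ n : ℕ, (T t (v n)) x ≤ (n:ℝ) * u x + φ 0 := ae_all_iff.2 hA
  have hqall : ∀ᵐ x ∂μ, ∀ q : ℚ, 0 < q → 0 ≤ u x → u x ≤ (q:ℝ) → (T t w) x ≤ φ q := by
    refine ae_all_iff.2 fun q => ?_
    by_cases hq : 0 < q
    · filter_upwards [hq_bound q hq] with x hx _ h1 h2 using hx h1 h2
    · exact ae_of_all _ fun x h => absurd h hq
  rw [← Lp.coeFn_le]
  filter_upwards [hu0ae, hw_coe, hae_sub, hAall, hqall] with x h0 hwx hsub hAx hqx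
  rcases eq_or_lt_of_le h0 with hux0 | hux
  · -- u x = 0
    have h1 : (T t w) x ≤ φ 0 := by
      refine le_of_tendsto hsub ?_
      filter_upwards with i
      have := hAx (ns i)
      rw [← hux0] at this
      simpa using this
    rw [hwx, ← hux0]
    exact h1
  · -- u x > 0
    set y : ℝ := u x with hy_def
    have hM0 : 0 ≤ (φ y - φ (y / 2)) / (y - y / 2) := by
      have h1 : φ (y / 2) ≤ φ y := hmono _ _ (by linarith) (by linarith)
      have h2 : 0 < y - y / 2 := by linarith
      exact div_nonneg (by linarith) h2.le
    set M : ℝ := (φ y - φ (y / 2)) / (y - y / 2) with hM_def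
    have hstep : ∀ ε : ℝ, 0 < ε → (T t w) x ≤ φ y + M * ε := by
      intro ε hε
      obtain ⟨q, hq1, hq2⟩ := exists_rat_btwn (lt_add_of_pos_right y hε)
      have hq0 : 0 < q := by
        have : (0:ℝ) < (q:ℝ) := hux.trans hq1
        exact_mod_cast this
      have h1 : (T t w) x ≤ φ q := hqx q hq0 h0 hq1.le
      have h2 : (φ (q:ℝ) - φ y) / ((q:ℝ) - y) ≤ M :=
        hφconc.slope_anti_adjacent (Set.mem_Ici.2 (by linarith)) (Set.mem_Ici.2 (by linarith))
          (by linarith) hq1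
      have hqy : 0 < (q:ℝ) - y := by linarith
      have h3 : φ (q:ℝ) - φ y ≤ M * ((q:ℝ) - y) := by
        have := mul_le_mul_of_nonneg_right h2 hqy.le
        rwa [div_mul_cancel₀ _ hqy.ne'] at this
      have h4 : M * ((q:ℝ) - y) ≤ M * ε := by
        apply mul_le_mul_of_nonneg_left _ hM0
        linarith
      linarith
    have hfinal : (T t w) x ≤ φ y := by
      refine le_of_forall_pos_le_add fun ε hε => ?_
      have hMε : 0 < ε / (M + 1) := by positivity
      have := hstep (ε / (M + 1)) hMε
      have h5 : M * (ε / (M + 1)) ≤ ε := by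
        rw [mul_div_assoc']
        rw [div_le_iff₀ (by linarith : (0:ℝ) < M + 1)]
        nlinarith
      linarith
    rw [hwx]
    exact hfinal
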